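/- Let g be a 2-dimensional restricted Lie algebra over an algebraically closed field of characteristic p > 0, belonging to one of the five standard isomorphism classes. If g has at least 3 distinct p-closed lines, among which at least one is of multiplicative type and at least one of additive type, then g is isomorphic to the non-abelian type with basis x, y, [x,y]=y, x^[p]=x, y^[p]=0; moreover every line of g is p-closed, exactly one line is of additive type, and all other lines are of multiplicative type. -/
import Mathlib


/-- If a 2-dimensional restricted Lie algebra (one of the five
standard types) has at least 3 distinct p-closed lines, at least one of
multiplicative type and at least one of additive type, then it is of the
non-abelian type `[x,y]=y`, `x^[p]=x`, `y^[p]=0`; moreover every line is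
p-closed, exactly one line is of additive type, and all other lines are of
multiplicative type.  The restricted structure is encoded by a faithful
embedding into an associative algebra. -/
theorem stmt_4 {k : Type*} [Field k] [IsAlgClosed k] {p : ℕ} (hp : p.Prime) [CharP k p]
    {L : Type*} [LieRing L] [LieAlgebra k L] (P : L → L)
    (A : Type*) [Ring A] [Algebra k A] (ι : L →ₗ[k] A)
    (hinj : Function.Injective ι)
    (hbrk : ∀ v w : L, ι ⁅v, w⁆ = ι v * ι w - ι w * ι v)
    (hpow : ∀ v : L, ι (P v) = ι v ^ p)
    (hclass : ∃ x y : L, LinearIndependent k ![x, y] ∧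
      Submodule.span k ({x, y} : Set L) = ⊤ ∧
      ((⁅x, y⁆ = y ∧ P x = x ∧ P y = 0) ∨
       (⁅x, y⁆ = 0 ∧ P x = 0 ∧ P y = 0) ∨
       (⁅x, y⁆ = 0 ∧ P x = x ∧ P y = 0) ∨
       (⁅x, y⁆ = 0 ∧ P x = y ∧ P y = 0) ∨
       (⁅x, y⁆ = 0 ∧ P x = x ∧ P y = y)))
    (l₁ l₂ l₃ : Submodule k L)
    (h12 : l₁ ≠ l₂) (h13 : l₁ ≠ l₃) (h23 : l₂ ≠ l₃)
    (hl₁ : ∃ v : L, v ≠ 0 ∧ l₁ = Submodule.span k {v} ∧ ∃ c : k, P v = c • v)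
    (hl₂ : ∃ v : L, v ≠ 0 ∧ l₂ = Submodule.span k {v} ∧ ∃ c : k, P v = c • v)
    (hl₃ : ∃ v : L, v ≠ 0 ∧ l₃ = Submodule.span k {v} ∧ ∃ c : k, P v = c • v)
    (hmult : ∃ v : L, v ≠ 0 ∧
      (l₁ = Submodule.span k {v} ∨ l₂ = Submodule.span k {v} ∨ l₃ = Submodule.span k {v}) ∧
      ∃ c : k, c ≠ 0 ∧ P v = c • v)
    (hadd : ∃ v : L, v ≠ 0 ∧
      (l₁ = Submodule.span k {v} ∨ l₂ = Submodule.span k {v} ∨ l₃ = Submodule.span k {v}) ∧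
      P v = 0) :
    (∃ x y : L, LinearIndependent k ![x, y] ∧
        Submodule.span k ({x, y} : Set L) = ⊤ ∧
        ⁅x, y⁆ = y ∧ P x = x ∧ P y = 0) ∧
    (∀ v : L, ∃ c : k, P v = c • v) ∧
    (∃! l : Submodule k L, ∃ v : L, v ≠ 0 ∧ l = Submodule.span k {v} ∧ P v = 0) ∧
    (∀ v : L, v ≠ 0 → P v = 0 ∨ ∃ c : k, c ≠ 0 ∧ P v = c • v) := by
  classical
  obtain ⟨x, y, hxy, hspan, hcase⟩ := hclass
  haveI : Fact p.Prime := ⟨hp⟩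
  have hpair : ∀ a b : k, a • x + b • y = 0 → a = 0 ∧ b = 0 :=
    fun a b h => LinearIndependent.pair_iff.mp hxy a b h
  have hx0 : x ≠ 0 := by
    intro h
    rcases hpair 1 0 (by simp [h]) with ⟨h1, -⟩
    exact one_ne_zero h1
  have hy0 : y ≠ 0 := by
    intro h
    rcases hpair 0 1 (by simp [h]) with ⟨-, h1⟩
    exact one_ne_zero h1
  have hrepr : ∀ v : L, ∃ a b : k, v = a • x + b • y := by
    intro v
    have hv : v ∈ Submodule.span k ({x, y} : Set L) := by rw [hspan]; trivial
    rcases Submodule.mem_span_pair.mp hv with ⟨a, b, h⟩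
    exact ⟨a, b, h.symm⟩
  have hιy : ι y ≠ 0 := fun h => hy0 (hinj (by rw [h, map_zero]))
  haveI : Nontrivial A := ⟨⟨ι y, 0, hιy⟩⟩
  haveI : CharP A p := charP_of_injective_algebraMap (algebraMap k A).injective p
  have hPsmul : ∀ (c : k) (v : L), P (c • v) = c ^ p • P v := fun c v =>
    hinj (by rw [hpow, map_smul, smul_pow, map_smul, hpow])
  have habel : ⁅x, y⁆ = 0 → ∀ a b : k,
      P (a • x + b • y) = a ^ p • P x + b ^ p • P y := by
    intro h0 a b
    have hxy' : ι x * ι y = ι y * ι x := by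
      have h := hbrk x y
      rw [h0, map_zero] at h
      exact sub_eq_zero.mp h.symm
    have hc : Commute (a • ι x) (b • ι y) := by
      show (a • ι x) * (b • ι y) = (b • ι y) * (a • ι x)
      simp only [smul_mul_assoc, mul_smul_comm, hxy', smul_comm a b]
    apply hinj
    simp only [map_add, map_smul, hpow]
    rw [add_pow_char_of_commute p hc, smul_pow, smul_pow]
  rcases hcase with ⟨hb, hPx, hPy⟩ | ⟨h0, hPx, hPy⟩ | ⟨h0, hPx, hPy⟩ |
    ⟨h0, hPx, hPy⟩ | ⟨h0, hPx, hPy⟩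
  · -- class 1 : the non-abelian algebra
    have hyx : ⁅y, x⁆ = -y := by rw [← lie_skew, hb]
    have key : ∀ a b : k, a ≠ 0 →
        ∃ c : k, c ≠ 0 ∧ P (a • x + b • y) = c • (a • x + b • y) := by
      intro a b ha
      set v := a • x + b • y with hv
      obtain ⟨α, β, hPv⟩ := hrepr (P v)
      have hvy : ⁅v, y⁆ = a • y := by
        rw [hv, add_lie, smul_lie, smul_lie, hb, lie_self, smul_zero, add_zero]
      have hZY : ι v * ι y = ι y * (ι v + algebraMap k A a) := by
        have h := hbrk v y
        rw [hvy, map_smul] at h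
        rw [mul_add, Algebra.algebraMap_eq_smul_one, mul_smul_comm, mul_one, h]
        abel
      have hZnY : ∀ n : ℕ, (ι v) ^ n * ι y = ι y * (ι v + algebraMap k A a) ^ n := by
        intro n
        induction n with
        | zero => simp
        | succ n ih => rw [pow_succ, mul_assoc, hZY, ← mul_assoc, ih, mul_assoc, ← pow_succ]
      have hcom : Commute (ι v) (algebraMap k A a) := (Algebra.commutes a (ι v)).symm
      have hW : (ι v + algebraMap k A a) ^ p = (ι v) ^ p + algebraMap k A (a ^ p) := by
        have h1 := add_pow_char_of_commute p hcom
        rw [← map_pow (algebraMap k A) a p] at h1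
        exact h1
      have hPvne : P v ≠ 0 := by
        intro h0'
        have hZp : (ι v) ^ p = 0 := by rw [← hpow, h0', map_zero]
        have hfin := hZnY p
        rw [hZp, zero_mul, hW, hZp, zero_add] at hfin
        have h1 : (a ^ p) • ι y = 0 := by
          rw [Algebra.algebraMap_eq_smul_one, mul_smul_comm, mul_one] at hfin
          exact hfin.symm
        have h2 : ι y = 0 := (smul_eq_zero.mp h1).resolve_left (pow_ne_zero p ha)
        exact hιy h2
      have hlie : ⁅v, P v⁆ = 0 := by
        apply hinj
        rw [hbrk, hpow, map_zero]
        exact sub_eq_zero.mpr ((Commute.refl (ι v)).pow_right p)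
      have hbr : ⁅v, P v⁆ = (a * β - b * α) • y := by
        rw [hv, hPv]
        simp only [add_lie, lie_add, lie_smul, smul_lie, lie_self, smul_zero,
          zero_add, add_zero, hb, hyx, smul_neg, smul_smul]
        module
      have hco : a * β - b * α = 0 := by
        have h0' : (a * β - b * α) • y = 0 := by rw [← hbr]; exact hlie
        exact (smul_eq_zero.mp h0').resolve_right hy0
      have hα : α ≠ 0 := by
        intro h0'
        apply hPvne
        have hβ : β = 0 := by
          have : a * β = 0 := by rw [h0', mul_zero, sub_zero] at hco; exact hco
          exact (mul_eq_zero.mp this).resolve_left ha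
        rw [hPv, h0', hβ, zero_smul, zero_smul, add_zero]
      refine ⟨α / a, div_ne_zero hα ha, ?_⟩
      rw [hPv, smul_add, smul_smul, smul_smul, div_mul_cancel₀ α ha]
      have hβ : β = α / a * b := by
        field_simp
        linear_combination hco
      rw [hβ]
    refine ⟨⟨x, y, hxy, hspan, hb, hPx, hPy⟩, ?_, ?_, ?_⟩
    · intro v
      obtain ⟨a, b, rfl⟩ := hrepr v
      by_cases ha : a = 0
      · subst ha
        exact ⟨0, by simp [hPsmul, hPy]⟩
      · obtain ⟨c, -, hc⟩ := key a b ha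
        exact ⟨c, hc⟩
    · refine ⟨Submodule.span k {y}, ⟨y, hy0, rfl, hPy⟩, ?_⟩
      rintro l ⟨v, hv0, rfl, hPv0⟩
      obtain ⟨a, b, rfl⟩ := hrepr v
      by_cases ha : a = 0
      · subst ha
        have hb0 : b ≠ 0 := fun h => hv0 (by simp [h])
        rw [zero_smul, zero_add]
        exact Submodule.span_singleton_smul_eq (isUnit_iff_ne_zero.mpr hb0) y
      · obtain ⟨c, hc0, hc⟩ := key a b ha
        rw [hPv0] at hc
        exact absurd ((smul_eq_zero.mp hc.symm).resolve_left hc0) hv0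
    · intro v hv0
      obtain ⟨a, b, rfl⟩ := hrepr v
      by_cases ha : a = 0
      · subst ha
        left
        simp [hPsmul, hPy]
      · right
        exact key a b ha
  · -- class 2 : everything zero, contradicts hmult
    exfalso
    obtain ⟨v, hv0, -, c, hc0, hPv⟩ := hmult
    obtain ⟨a, b, rfl⟩ := hrepr v
    rw [habel h0, hPx, hPy, smul_zero, smul_zero, add_zero] at hPv
    exact hv0 ((smul_eq_zero.mp hPv.symm).resolve_left hc0)
  · -- class 3 : contradicts 3 distinct lines
    exfalso
    have hline : ∀ l : Submodule k L,
        (∃ v : L, v ≠ 0 ∧ l = Submodule.span k {v} ∧ ∃ c : k, P v = c • v) →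
        l = Submodule.span k {x} ∨ l = Submodule.span k {y} := by
      rintro l ⟨v, hv0, rfl, c, hPv⟩
      obtain ⟨a, b, rfl⟩ := hrepr v
      rw [habel h0, hPx, hPy, smul_zero, add_zero, smul_add, smul_smul, smul_smul] at hPv
      have heq : (a ^ p - c * a) • x + (-(c * b)) • y = 0 := by
        rw [sub_smul, neg_smul, hPv]
        abel
      obtain ⟨e1, e2⟩ := hpair _ _ heq
      by_cases hc : c = 0
      · subst hc
        have ha : a = 0 := by
          rw [zero_mul, sub_zero] at e1
          exact pow_eq_zero_iff hp.ne_zero |>.mp e1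
        subst ha
        right
        have hb0 : b ≠ 0 := fun h => hv0 (by simp [h])
        rw [zero_smul, zero_add]
        exact Submodule.span_singleton_smul_eq (isUnit_iff_ne_zero.mpr hb0) y
      · have hb' : b = 0 := (mul_eq_zero.mp (neg_eq_zero.mp e2)).resolve_left hc
        subst hb'
        left
        have ha0 : a ≠ 0 := fun h => hv0 (by simp [h])
        rw [zero_smul, add_zero]
        exact Submodule.span_singleton_smul_eq (isUnit_iff_ne_zero.mpr ha0) x
    rcases hline l₁ hl₁ with h1 | h1 <;> rcases hline l₂ hl₂ with h2 | h2 <;>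
      rcases hline l₃ hl₃ with h3 | h3 <;> simp_all
  · -- class 4 : contradicts distinct lines
    exfalso
    have hline : ∀ l : Submodule k L,
        (∃ v : L, v ≠ 0 ∧ l = Submodule.span k {v} ∧ ∃ c : k, P v = c • v) →
        l = Submodule.span k {y} := by
      rintro l ⟨v, hv0, rfl, c, hPv⟩
      obtain ⟨a, b, rfl⟩ := hrepr v
      rw [habel h0, hPx, hPy, smul_zero, add_zero, smul_add, smul_smul, smul_smul] at hPv
      have heq : (-(c * a)) • x + (a ^ p - c * b) • y = 0 := by
        rw [neg_smul, sub_smul, hPv]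
        abel
      obtain ⟨e1, e2⟩ := hpair _ _ heq
      have ha : a = 0 := by
        by_contra ha
        have hc : c = 0 := (mul_eq_zero.mp (neg_eq_zero.mp e1)).resolve_right ha
        rw [hc, zero_mul, sub_zero] at e2
        exact ha (pow_eq_zero_iff hp.ne_zero |>.mp e2)
      subst ha
      have hb0 : b ≠ 0 := fun h => hv0 (by simp [h])
      rw [zero_smul, zero_add]
      exact Submodule.span_singleton_smul_eq (isUnit_iff_ne_zero.mpr hb0) y
    exact h12 ((hline l₁ hl₁).trans (hline l₂ hl₂).symm)
  · -- class 5 : contradicts hadd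
    exfalso
    obtain ⟨v, hv0, -, hPv⟩ := hadd
    obtain ⟨a, b, rfl⟩ := hrepr v
    rw [habel h0, hPx, hPy] at hPv
    obtain ⟨ha, hb'⟩ := hpair _ _ hPv
    rw [pow_eq_zero_iff hp.ne_zero] at ha hb'
    exact hv0 (by simp [ha, hb'])
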